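/- Let G be a graph, k ≥ 2 an integer, and U a subset of vertices of G. There exist k matchings whose union covers every vertex of U if and only if |S| ≤ k·|N(S)| for every stable set S contained in U. -/

import Mathlib

/-- `M` is a matching of `G`: a set of edges of `G` that are pairwise vertex-disjoint. -/
def IsMatching {V : Type*} (G : SimpleGraph V) (M : Finset (Sym2 V)) : Prop :=
  ↑M ⊆ G.edgeSet ∧ (M : Set (Sym2 V)).Pairwise fun e f => ∀ v : V, ¬(v ∈ e ∧ v ∈ f)

/-- A vertex `v` is covered by an edge set `F` if some edge of `F` is incident to it. -/
def Covers {V : Type*} (F : Finset (Sym2 V)) (v : V) : Prop := ∃ e ∈ F, v ∈ e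

instance {V : Type*} [DecidableEq V] (F : Finset (Sym2 V)) (v : V) : Decidable (Covers F v) :=
  inferInstanceAs (Decidable (∃ e ∈ F, v ∈ e))

/-- A stable (independent) set of vertices. -/
def IsStable {V : Type*} (G : SimpleGraph V) (S : Finset V) : Prop :=
  ∀ u ∈ S, ∀ v ∈ S, ¬ G.Adj u v

/-- The external neighborhood `N(S)`. -/
def nbr {V : Type*} [Fintype V] [DecidableEq V] (G : SimpleGraph V) [DecidableRel G.Adj]
    (S : Finset V) : Finset V :=
  Finset.univ.filter fun w => w ∉ S ∧ ∃ u ∈ S, G.Adj u w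

/-- degree of a vertex in an edge set -/
def degF {V : Type*} [DecidableEq V] (F : Finset (Sym2 V)) (v : V) : ℕ :=
  (F.filter fun e => v ∈ e).card

namespace Stmt3Aux

open Finset


variable {V : Type*} [DecidableEq V]

/-- Greedy system of distinct colors avoiding per-element forbidden sets. -/
lemma mini_color {k : ℕ} (hk : 0 < k) (s : Finset V) :
    ∀ (pre : V → Finset (Fin k)), (∀ x ∈ s, (pre x).card + s.card ≤ k) →
    ∃ c : V → Fin k, Set.InjOn c ↑s ∧ ∀ x ∈ s, c x ∉ pre x := by
  induction s using Finset.induction_on with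
  | empty =>
    intro pre _
    exact ⟨fun _ => ⟨0, hk⟩, by simp [Set.InjOn], by simp⟩
  | @insert x s hxs IH =>
    intro pre hpre
    have hcard : (insert x s).card = s.card + 1 := card_insert_of_notMem hxs
    have hx : (pre x).card < k := by
      have := hpre x (mem_insert_self _ _); omega
    have hγ : ∃ γ : Fin k, γ ∉ pre x := by
      by_contra h
      push_neg at h
      have : (univ : Finset (Fin k)) ⊆ pre x := fun γ _ => h γ
      have := card_le_card this
      rw [card_univ, Fintype.card_fin] at this
      omega
    obtain ⟨γ, hγ⟩ := hγ
    obtain ⟨c', hinj', havoid'⟩ := IH (fun y => insert γ (pre y)) (by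
      intro y hy
      show (insert γ (pre y)).card + s.card ≤ k
      have h1 := hpre y (mem_insert_of_mem hy)
      have h2 := card_insert_le γ (pre y)
      omega)
    have havoid'' : ∀ y ∈ s, c' y ∉ insert γ (pre y) := fun y hy => havoid' y hy
    refine ⟨Function.update c' x γ, ?_, ?_⟩
    · intro a ha b hb heq
      rw [coe_insert] at ha hb
      rcases ha with rfl | ha <;> rcases hb with rfl | hb
      · rfl
      · exfalso
        have hbs : b ∈ s := mem_coe.1 hb
        have hbx : b ≠ a := fun h => hxs (h ▸ hbs)
        rw [Function.update_self, Function.update_of_ne hbx] at heq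
        exact havoid'' b hbs (by rw [← heq]; exact mem_insert_self _ _)
      · exfalso
        have has : a ∈ s := mem_coe.1 ha
        have hax : a ≠ b := fun h => hxs (h ▸ has)
        rw [Function.update_self, Function.update_of_ne hax] at heq
        exact havoid'' a has (by rw [heq]; exact mem_insert_self _ _)
      · have has : a ∈ s := mem_coe.1 ha
        have hbs : b ∈ s := mem_coe.1 hb
        rw [Function.update_of_ne (show a ≠ x from fun h => hxs (by rw [← h]; exact has)),
          Function.update_of_ne (show b ≠ x from fun h => hxs (by rw [← h]; exact hbs))] at heq
        exact hinj' ha hb heq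
    · intro y hy
      rcases mem_insert.1 hy with rfl | hy
      · rw [Function.update_self]; exact hγ
      · rw [Function.update_of_ne (show y ≠ x from fun h => hxs (by rw [← h]; exact hy))]
        intro hmem
        exact havoid'' y hy (mem_insert_of_mem hmem)

/-- Coloring of the kept set: distinct colors within fibers, child ≠ parent. -/
lemma lemE {k : ℕ} (hk : 0 < k) (g : V → V) :
    ∀ (n : ℕ) (K : Finset V), K.card ≤ n →
    ∀ (pre : V → Finset (Fin k)),
    (∀ x ∈ K, (pre x).card + (K.filter fun y => g y = g x).card ≤ k) →
    (∀ x ∈ K, (K.filter fun y => g y = x).card ≤ k - 1) →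
    (∀ x ∈ K, g x ∈ K → pre x = ∅) →
    (∀ x ∈ K, ∃ m : ℕ, g^[m] x ∉ K) →
    ∃ c : V → Fin k, (∀ x ∈ K, c x ∉ pre x) ∧
      (∀ x ∈ K, ∀ y ∈ K, x ≠ y → g x = g y → c x ≠ c y) ∧
      (∀ x ∈ K, g x ∈ K → c x ≠ c (g x)) := by
  intro n
  induction n with
  | zero =>
    intro K hcard pre _ _ _ _
    have : K = ∅ := card_eq_zero.1 (Nat.le_zero.1 hcard)
    subst this
    exact ⟨fun _ => ⟨0, hk⟩, by simp, by simp, by simp⟩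
  | succ n IH =>
    intro K hcard pre h1 h2 h3 h4
    rcases K.eq_empty_or_nonempty with rfl | ⟨x, hx⟩
    · exact ⟨fun _ => ⟨0, hk⟩, by simp, by simp, by simp⟩
    · have hex : ∃ m : ℕ, g^[m] x ∉ K := h4 x hx
      set n₀ := Nat.find hex with hn₀def
      have hn₀ : g^[n₀] x ∉ K := Nat.find_spec hex
      have hn₀pos : n₀ ≠ 0 := by
        intro h; rw [h] at hn₀; exact hn₀ hx
      set y := g^[n₀ - 1] x with hydef
      have hy : y ∈ K := by
        by_contra h
        exact absurd (Nat.find_min hex (by omega : n₀ - 1 < n₀)) (by simpa using h)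
      set w₀ := g y with hw₀def
      have hw₀ : w₀ ∉ K := by
        have : g^[n₀] x = g (g^[n₀ - 1] x) := by
          conv_lhs => rw [show n₀ = (n₀ - 1) + 1 by omega]
          rw [Function.iterate_succ_apply']
        rw [hw₀def, ← this]; exact hn₀
      set F₀ := K.filter (fun z => g z = w₀) with hF₀def
      have hyF₀ : y ∈ F₀ := mem_filter.2 ⟨hy, rfl⟩
      have hF₀K : F₀ ⊆ K := filter_subset _ _
      have hmini : ∀ z ∈ F₀, (pre z).card + F₀.card ≤ k := by
        intro z hz
        obtain ⟨hzK, hgz⟩ := mem_filter.1 hz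
        have := h1 z hzK
        have heq : K.filter (fun y => g y = g z) = F₀ := by
          rw [hF₀def]
          apply filter_congr
          intro a _
          rw [hgz]
        rwa [heq] at this
      obtain ⟨c₀, hc₀inj, hc₀avoid⟩ := mini_color hk F₀ pre hmini
      set K' := K \ F₀ with hK'def
      have hK'K : K' ⊆ K := sdiff_subset
      have hK'card : K'.card < K.card :=
        card_lt_card ⟨hK'K, fun hsub => (mem_sdiff.1 (hsub hy)).2 hyF₀⟩
      set pre' := fun z => if g z ∈ F₀ then insert (c₀ (g z)) (pre z) else pre z with hpre'def
      have hK'mem : ∀ z, z ∈ K' ↔ z ∈ K ∧ ¬(g z = w₀) := by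
        intro z
        rw [hK'def, mem_sdiff, hF₀def, mem_filter]
        tauto
      obtain ⟨c', hc'avoid, hc'fib, hc'par⟩ := IH K' (by omega) pre'
        (by -- h1'
          intro z hz
          obtain ⟨hzK, hzgw⟩ := (hK'mem z).1 hz
          have hfsub : (K'.filter fun y => g y = g z) ⊆ (K.filter fun y => g y = g z) :=
            filter_subset_filter _ hK'K
          by_cases hgz : g z ∈ F₀
          · have hgzK : g z ∈ K := hF₀K hgz
            have hpre0 : pre z = ∅ := h3 z hzK hgzK
            have : pre' z = insert (c₀ (g z)) (pre z) := if_pos hgz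
            rw [this, hpre0]
            have h2' := h2 (g z) hgzK
            have : (K'.filter fun y => g y = g z).card ≤ k - 1 :=
              le_trans (card_le_card hfsub) h2'
            simp only [insert_empty_eq, card_singleton]
            omega
          · have : pre' z = pre z := if_neg hgz
            rw [this]
            exact le_trans (by have := card_le_card hfsub; omega) (h1 z hzK)
          )
        (by -- h2'
          intro z hz
          exact le_trans (card_le_card (filter_subset_filter _ hK'K)) (h2 z (hK'K hz)))
        (by -- h3'
          intro z hz hgz
          have hzK := hK'K hz
          have hgzK := hK'K hgz
          have hgzF : g z ∉ F₀ := fun hmem => ((hK'mem (g z)).1 hgz).2 (mem_filter.1 hmem).2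
          have : pre' z = pre z := if_neg hgzF
          rw [this]
          exact h3 z hzK hgzK)
        (by -- h4'
          intro z hz
          obtain ⟨m, hm⟩ := h4 z (hK'K hz)
          exact ⟨m, fun h => hm (hK'K h)⟩)
      refine ⟨fun z => if z ∈ F₀ then c₀ z else c' z, ?_, ?_, ?_⟩
      · intro z hz
        by_cases hzF : z ∈ F₀
        · simp only [if_pos hzF]; exact hc₀avoid z hzF
        · simp only [if_neg hzF]
          have hz' : z ∈ K' := (hK'mem z).2 ⟨hz, fun h => hzF (mem_filter.2 ⟨hz, h⟩)⟩
          have := hc'avoid z hz'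
          intro hmem
          apply this
          by_cases hgz : g z ∈ F₀
          · rw [hpre'def]; simp only [if_pos hgz]; exact mem_insert_of_mem hmem
          · rw [hpre'def]; simp only [if_neg hgz]; exact hmem
      · intro a ha b hb hab hgab
        by_cases haF : a ∈ F₀ <;> by_cases hbF : b ∈ F₀
        · simp only [if_pos haF, if_pos hbF]
          exact fun h => hab (hc₀inj haF hbF h)
        · exfalso
          apply hbF
          rw [hF₀def, mem_filter]
          exact ⟨hb, by rw [← hgab]; exact (mem_filter.1 haF).2⟩
        · exfalso
          apply haF
          rw [hF₀def, mem_filter]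
          exact ⟨ha, by rw [hgab]; exact (mem_filter.1 hbF).2⟩
        · simp only [if_neg haF, if_neg hbF]
          exact hc'fib a ((hK'mem a).2 ⟨ha, fun h => haF (mem_filter.2 ⟨ha, h⟩)⟩)
            b ((hK'mem b).2 ⟨hb, fun h => hbF (mem_filter.2 ⟨hb, h⟩)⟩) hab hgab
      · intro z hz hgz
        have hzF : z ∉ F₀ := by
          intro h
          exact hw₀ (by rw [← (mem_filter.1 h).2]; exact hgz)
        have hz' : z ∈ K' := (hK'mem z).2 ⟨hz, fun h => hzF (mem_filter.2 ⟨hz, h⟩)⟩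
        simp only [if_neg hzF]
        by_cases hgzF : g z ∈ F₀
        · simp only [if_pos hgzF]
          have := hc'avoid z hz'
          intro heq
          apply this
          rw [hpre'def]
          simp only [if_pos hgzF]
          rw [heq]
          exact mem_insert_self _ _
        · simp only [if_neg hgzF]
          exact hc'par z hz' ((hK'mem (g z)).2 ⟨hgz, fun h => hgzF (mem_filter.2 ⟨hgz, h⟩)⟩)


/-- Existence of a "kept set" K in a functional digraph: K ⊆ U covers U (each uncovered
vertex has a kept child), each kept vertex has at most k-1 kept children, and every kept
vertex escapes K under iteration. -/
lemma lemF {k : ℕ} (hk : 2 ≤ k) (g : V → V) :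
    ∀ (n : ℕ) (U : Finset V), U.card ≤ n →
    (∀ u ∈ U, g u ≠ u) →
    (∀ w : V, (U.filter fun u => g u = w).card ≤ k) →
    ∃ K : Finset V, K ⊆ U ∧
      (∀ u ∈ U, u ∈ K ∨ ∃ x ∈ K, g x = u) ∧
      (∀ w ∈ K, (K.filter fun u => g u = w).card ≤ k - 1) ∧
      (∀ x ∈ K, ∃ m : ℕ, g^[m] x ∉ K) := by
  intro n
  induction n with
  | zero =>
    intro U hcard _ _
    have : U = ∅ := card_eq_zero.1 (Nat.le_zero.1 hcard)
    subst this
    exact ⟨∅, by simp, by simp, by simp, by simp⟩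
  | succ n IH =>
    intro U hcard hg hfib
    rcases U.eq_empty_or_nonempty with rfl | hUne
    · exact ⟨∅, by simp, by simp, by simp, by simp⟩
    by_cases hper : ∃ x₀ ∈ U, ∃ m : ℕ, 0 < m ∧ g^[m] x₀ = x₀ ∧ ∀ t : ℕ, g^[t] x₀ ∈ U
    · -- CASE 1 : there is a cycle entirely inside U
      obtain ⟨x₀, hx₀U, m, hm, hper0, horb⟩ := hper
      have hpp : Function.IsPeriodicPt g m x₀ := hper0
      set C := (range m).image (fun t => g^[t] x₀) with hCdef
      have hmemC : ∀ c, c ∈ C ↔ ∃ a, a < m ∧ g^[a] x₀ = c := by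
        intro c
        simp [hCdef, mem_image, mem_range]
      have hx₀C : x₀ ∈ C := (hmemC x₀).2 ⟨0, hm, rfl⟩
      have hCU : C ⊆ U := by
        intro c hc
        obtain ⟨a, -, rfl⟩ := (hmemC c).1 hc
        exact horb a
      have hCg : ∀ c ∈ C, g c ∈ C := by
        intro c hc
        obtain ⟨a, ha, rfl⟩ := (hmemC c).1 hc
        have h1 : g (g^[a] x₀) = g^[a+1] x₀ := (Function.iterate_succ_apply' g a x₀).symm
        rw [h1, ← hpp.iterate_mod_apply (a+1)]
        exact (hmemC _).2 ⟨(a+1) % m, Nat.mod_lt _ hm, rfl⟩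
      have hCper : ∀ c ∈ C, g^[m] c = c := by
        intro c hc
        obtain ⟨a, ha, rfl⟩ := (hmemC c).1 hc
        calc g^[m] (g^[a] x₀) = g^[m + a] x₀ := (Function.iterate_add_apply g m a x₀).symm
          _ = g^[a + m] x₀ := by rw [Nat.add_comm]
          _ = g^[a] (g^[m] x₀) := Function.iterate_add_apply g a m x₀
          _ = g^[a] x₀ := by rw [hper0]
      have hpre_unique : ∀ c ∈ C, ∀ z ∈ C, g z = c → z = g^[m-1] c := by
        intro c hc z hz hgz
        have h1 : g^[m] z = z := hCper z hz
        have h2 : g^[m] z = g^[m-1] (g z) := by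
          conv_lhs => rw [show m = (m-1)+1 by omega]
          rw [Function.iterate_succ_apply]
        rw [← hgz, ← h2]
        exact h1.symm
      have hreach : ∀ c ∈ C, ∀ c' ∈ C, ∃ t : ℕ, g^[t] c = c' := by
        intro c hc c' hc'
        obtain ⟨a, ha, rfl⟩ := (hmemC c).1 hc
        obtain ⟨b, hb, rfl⟩ := (hmemC c').1 hc'
        refine ⟨b + (m - a), ?_⟩
        rw [← Function.iterate_add_apply]
        rw [show b + (m - a) + a = b + m by omega]
        rw [Function.iterate_add_apply, hper0]
      set U' := U \ C with hU'def
      have hU'card : U'.card < U.card :=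
        card_lt_card ⟨sdiff_subset, fun hsub => (mem_sdiff.1 (hsub (hCU hx₀C))).2 hx₀C⟩
      obtain ⟨K', hK'U', hcov', h3a', hesc'⟩ := IH U' (by omega)
        (fun u hu => hg u (sdiff_subset hu))
        (fun w => le_trans (card_le_card (filter_subset_filter _ sdiff_subset)) (hfib w))
      have hK'U : K' ⊆ U := hK'U'.trans sdiff_subset
      have hK'C : ∀ z ∈ K', z ∉ C := fun z hz => (mem_sdiff.1 (hK'U' hz)).2
      have hU'filter : ∀ w : V, K'.filter (fun u => g u = w) = K'.filter (fun u => g u = w) := fun _ => rfl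
      by_cases hsupp : ∃ c ∈ C, ∃ yy ∈ K', g yy = c
      · -- Branch A : some cycle vertex is supported from outside
        obtain ⟨cs, hcsC, hcssupp⟩ := hsupp
        set Kc := C.filter (fun c => ¬∃ yy ∈ K', g yy = c) with hKcdef
        set K := K' ∪ Kc with hKdef
        have hKcC : Kc ⊆ C := filter_subset _ _
        have hcsK : cs ∉ K := by
          rw [hKdef, mem_union]
          push_neg
          exact ⟨fun h => hK'C cs h hcsC, fun h => (mem_filter.1 h).2 hcssupp⟩
        have hKcesc : ∀ c ∈ Kc, ∃ t : ℕ, g^[t] c ∉ K := by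
          intro c hc
          obtain ⟨t, ht⟩ := hreach c (hKcC hc) cs hcsC
          exact ⟨t, by rw [ht]; exact hcsK⟩
        refine ⟨K, union_subset hK'U (hKcC.trans hCU), ?_, ?_, ?_⟩
        · intro u hu
          by_cases huC : u ∈ C
          · by_cases husupp : ∃ yy ∈ K', g yy = u
            · obtain ⟨yy, hyyK', hgyy⟩ := husupp
              exact Or.inr ⟨yy, mem_union_left _ hyyK', hgyy⟩
            · exact Or.inl (mem_union_right _ (mem_filter.2 ⟨huC, husupp⟩))
          · rcases hcov' u (mem_sdiff.2 ⟨hu, huC⟩) with h | ⟨x, hx, hgx⟩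
            · exact Or.inl (mem_union_left _ h)
            · exact Or.inr ⟨x, mem_union_left _ hx, hgx⟩
        · intro w hw
          rcases mem_union.1 hw with hwK' | hwKc
          · have hsub : K.filter (fun u => g u = w) ⊆ K'.filter (fun u => g u = w) := by
              intro z hz
              obtain ⟨hzK, hgz⟩ := mem_filter.1 hz
              rcases mem_union.1 hzK with h | h
              · exact mem_filter.2 ⟨h, hgz⟩
              · exact absurd (hgz ▸ hCg z (hKcC h)) (hK'C w hwK')
            exact le_trans (card_le_card hsub) (h3a' w hwK')
          · have hwC := hKcC hwKc
            have hsub : K.filter (fun u => g u = w) ⊆ {g^[m-1] w} := by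
              intro z hz
              obtain ⟨hzK, hgz⟩ := mem_filter.1 hz
              rcases mem_union.1 hzK with h | h
              · exact absurd ⟨z, h, hgz⟩ ((mem_filter.1 hwKc).2)
              · exact mem_singleton.2 (hpre_unique w hwC z (hKcC h) hgz)
            calc (K.filter fun u => g u = w).card ≤ 1 := by
                  simpa using card_le_card hsub
              _ ≤ k - 1 := by omega
        · intro x hx
          rcases mem_union.1 hx with hxK' | hxKc
          · obtain ⟨m₁, hm₁⟩ := hesc' x hxK'
            by_cases hz : g^[m₁] x ∈ Kc
            · obtain ⟨t, ht⟩ := hKcesc _ hz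
              exact ⟨t + m₁, by rw [Function.iterate_add_apply]; exact ht⟩
            · refine ⟨m₁, ?_⟩
              rw [hKdef, mem_union]
              push_neg
              exact ⟨hm₁, hz⟩
          · exact hKcesc x hxKc
      · -- Branch B : no cycle vertex supported; drop x₀ from the cycle
        push_neg at hsupp
        set Kc := C.erase x₀ with hKcdef
        set K := K' ∪ Kc with hKdef
        have hKcC : Kc ⊆ C := erase_subset _ _
        have hx₀K : x₀ ∉ K := by
          rw [hKdef, mem_union]
          push_neg
          exact ⟨fun h => hK'C x₀ h hx₀C, notMem_erase _ _⟩
        have hKcesc : ∀ c ∈ Kc, ∃ t : ℕ, g^[t] c ∉ K := by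
          intro c hc
          obtain ⟨t, ht⟩ := hreach c (hKcC hc) x₀ hx₀C
          exact ⟨t, by rw [ht]; exact hx₀K⟩
        refine ⟨K, union_subset hK'U (hKcC.trans hCU), ?_, ?_, ?_⟩
        · intro u hu
          by_cases huC : u ∈ C
          · by_cases hux₀ : u = x₀
            · subst hux₀
              have hxC : g^[m-1] u ∈ C := (hmemC _).2 ⟨m-1, by omega, rfl⟩
              have hgx : g (g^[m-1] u) = u := by
                have h2 : g^[m] u = g (g^[m-1] u) := by
                  conv_lhs => rw [show m = (m-1)+1 by omega]
                  rw [Function.iterate_succ_apply']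
                rw [← h2, hper0]
              have hne : g^[m-1] u ≠ u := by
                intro h
                rw [h] at hgx
                exact hg u hx₀U hgx
              exact Or.inr ⟨g^[m-1] u, mem_union_right _ (mem_erase.2 ⟨hne, hxC⟩), hgx⟩
            · exact Or.inl (mem_union_right _ (mem_erase.2 ⟨hux₀, huC⟩))
          · rcases hcov' u (mem_sdiff.2 ⟨hu, huC⟩) with h | ⟨x, hx, hgx⟩
            · exact Or.inl (mem_union_left _ h)
            · exact Or.inr ⟨x, mem_union_left _ hx, hgx⟩
        · intro w hw
          rcases mem_union.1 hw with hwK' | hwKc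
          · have hsub : K.filter (fun u => g u = w) ⊆ K'.filter (fun u => g u = w) := by
              intro z hz
              obtain ⟨hzK, hgz⟩ := mem_filter.1 hz
              rcases mem_union.1 hzK with h | h
              · exact mem_filter.2 ⟨h, hgz⟩
              · exact absurd (hgz ▸ hCg z (hKcC h)) (hK'C w hwK')
            exact le_trans (card_le_card hsub) (h3a' w hwK')
          · have hwC := hKcC hwKc
            have hsub : K.filter (fun u => g u = w) ⊆ {g^[m-1] w} := by
              intro z hz
              obtain ⟨hzK, hgz⟩ := mem_filter.1 hz
              rcases mem_union.1 hzK with h | h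
              · exact absurd hgz (hsupp w hwC z h)
              · exact mem_singleton.2 (hpre_unique w hwC z (hKcC h) hgz)
            calc (K.filter fun u => g u = w).card ≤ 1 := by
                  simpa using card_le_card hsub
              _ ≤ k - 1 := by omega
        · intro x hx
          rcases mem_union.1 hx with hxK' | hxKc
          · obtain ⟨m₁, hm₁⟩ := hesc' x hxK'
            by_cases hz : g^[m₁] x ∈ Kc
            · obtain ⟨t, ht⟩ := hKcesc _ hz
              exact ⟨t + m₁, by rw [Function.iterate_add_apply]; exact ht⟩
            · refine ⟨m₁, ?_⟩
              rw [hKdef, mem_union]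
              push_neg
              exact ⟨hm₁, hz⟩
          · exact hKcesc x hxKc
    · -- CASE 2 : no cycle inside U, so there is a "terminal star"
      have hterm : ∃ v : V, (U.filter fun u => g u = v).Nonempty ∧
          ∀ x ∈ U.filter (fun u => g u = v), U.filter (fun u => g u = x) = ∅ := by
        by_contra hno
        push_neg at hno
        have hstep : ∀ v : V, (U.filter fun u => g u = v).Nonempty →
            ∃ x : V, (x ∈ U ∧ g x = v) ∧ (U.filter fun u => g u = x).Nonempty := by
          intro v hv
          obtain ⟨x, hx, hne⟩ := hno v hv
          obtain ⟨hxU, hgx⟩ := mem_filter.1 hx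
          exact ⟨x, ⟨hxU, hgx⟩, hne⟩
        obtain ⟨u₀, hu₀⟩ := hUne
        have hs₀ : (U.filter fun u => g u = g u₀).Nonempty := ⟨u₀, mem_filter.2 ⟨hu₀, rfl⟩⟩
        let step : {v : V // (U.filter fun u => g u = v).Nonempty} →
            {v : V // (U.filter fun u => g u = v).Nonempty} :=
          fun s => ⟨(hstep s.1 s.2).choose, (hstep s.1 s.2).choose_spec.2⟩
        let seq : ℕ → {v : V // (U.filter fun u => g u = v).Nonempty} :=
          fun n => step^[n] ⟨g u₀, hs₀⟩
        have hseqsucc : ∀ n : ℕ, seq (n+1) = step (seq n) := by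
          intro n
          exact Function.iterate_succ_apply' step n _
        have hkey : ∀ n : ℕ, (seq (n+1)).1 ∈ U ∧ g (seq (n+1)).1 = (seq n).1 := by
          intro n
          rw [hseqsucc]
          exact ⟨(hstep (seq n).1 (seq n).2).choose_spec.1.1,
            (hstep (seq n).1 (seq n).2).choose_spec.1.2⟩
        have hiter : ∀ t n : ℕ, g^[t] (seq (n + t)).1 = (seq n).1 := by
          intro t
          induction t with
          | zero => intro n; simp
          | succ t IHt =>
            intro n
            rw [Function.iterate_succ_apply]
            have h1 : g (seq (n + (t+1))).1 = (seq (n + t)).1 := by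
              rw [show n + (t+1) = (n + t) + 1 by omega]
              exact (hkey (n + t)).2
            rw [h1]
            exact IHt n
        have hpig : ∃ i ∈ range (U.card + 1), ∃ j ∈ range (U.card + 1), i ≠ j ∧
            (seq (i+1)).1 = (seq (j+1)).1 := by
          exact exists_ne_map_eq_of_card_lt_of_maps_to (t := U)
            (by rw [card_range]; omega) (fun a _ => (hkey a).1)
        have hpig2 : ∃ i j : ℕ, i < j ∧ (seq (i+1)).1 = (seq (j+1)).1 := by
          obtain ⟨i, -, j, -, hij, hseqeq⟩ := hpig
          rcases Nat.lt_or_ge i j with hlt | hge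
          · exact ⟨i, j, hlt, hseqeq⟩
          · exact ⟨j, i, by omega, hseqeq.symm⟩
        obtain ⟨i, j, hlt, heq⟩ := hpig2
        apply hper
        refine ⟨(seq (j+1)).1, (hkey j).1, j - i, by omega, ?_, ?_⟩
        · have h1 := hiter (j - i) (i + 1)
          rw [show i + 1 + (j - i) = j + 1 by omega] at h1
          rw [h1]
          exact heq
        · have hpp2 : Function.IsPeriodicPt g (j - i) (seq (j+1)).1 := by
            show g^[j-i] (seq (j+1)).1 = (seq (j+1)).1
            have h1 := hiter (j - i) (i + 1)
            rw [show i + 1 + (j - i) = j + 1 by omega] at h1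
            rw [h1]
            exact heq
          intro t
          rw [← hpp2.iterate_mod_apply t]
          have hr : t % (j - i) < j - i := Nat.mod_lt _ (by omega)
          have h2 := hiter (t % (j - i)) (j + 1 - t % (j - i))
          rw [show j + 1 - t % (j - i) + t % (j - i) = j + 1 by omega] at h2
          rw [h2]
          rw [show j + 1 - t % (j - i) = (j - t % (j - i)) + 1 by omega]
          exact (hkey (j - t % (j - i))).1
      obtain ⟨v, hfvne, hterm2⟩ := hterm
      set Fv := U.filter (fun u => g u = v) with hFvdef
      obtain ⟨y₀, hy₀⟩ := hfvne
      set U' := U \ insert v Fv with hU'def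
      have hFvU : Fv ⊆ U := filter_subset _ _
      have hU'card : U'.card < U.card := card_lt_card ⟨sdiff_subset, fun hsub =>
        (mem_sdiff.1 (hsub (hFvU hy₀))).2 (mem_insert_of_mem hy₀)⟩
      obtain ⟨K', hK'U', hcov', h3a', hesc'⟩ := IH U' (by omega)
        (fun u hu => hg u (sdiff_subset hu))
        (fun w => le_trans (card_le_card (filter_subset_filter _ sdiff_subset)) (hfib w))
      set K := K' ∪ Fv with hKdef
      have hK'U : K' ⊆ U := hK'U'.trans sdiff_subset
      have hvU' : v ∉ U' := fun h => (mem_sdiff.1 h).2 (mem_insert_self _ _)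
      have hvK : v ∉ K := by
        rw [hKdef, mem_union]
        push_neg
        refine ⟨fun h => hvU' (hK'U' h), fun h => hg v (hFvU h) (mem_filter.1 h).2⟩
      refine ⟨K, union_subset hK'U hFvU, ?_, ?_, ?_⟩
      · intro u hu
        by_cases hu' : u ∈ U'
        · rcases hcov' u hu' with h | ⟨x, hx, hgx⟩
          · exact Or.inl (mem_union_left _ h)
          · exact Or.inr ⟨x, mem_union_left _ hx, hgx⟩
        · have hins : u ∈ insert v Fv := by
            by_contra h
            exact hu' (mem_sdiff.2 ⟨hu, h⟩)
          rcases mem_insert.1 hins with rfl | huFv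
          · exact Or.inr ⟨y₀, mem_union_right _ hy₀, (mem_filter.1 hy₀).2⟩
          · exact Or.inl (mem_union_right _ huFv)
      · intro w hw
        rcases mem_union.1 hw with hwK' | hwFv
        · have hwv : w ≠ v := fun h => hvU' (h ▸ hK'U' hwK')
          have hsub : K.filter (fun u => g u = w) ⊆ K'.filter (fun u => g u = w) := by
            intro z hz
            obtain ⟨hzK, hgz⟩ := mem_filter.1 hz
            rcases mem_union.1 hzK with h | h
            · exact mem_filter.2 ⟨h, hgz⟩
            · exact absurd (hgz.symm.trans (mem_filter.1 h).2) hwv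
          exact le_trans (card_le_card hsub) (h3a' w hwK')
        · have hempty : K.filter (fun u => g u = w) = ∅ := by
            rw [eq_empty_iff_forall_notMem]
            intro z hz
            obtain ⟨hzK, hgz⟩ := mem_filter.1 hz
            have hzU : z ∈ U := (union_subset hK'U hFvU) hzK
            have hmem : z ∈ U.filter (fun u => g u = w) := mem_filter.2 ⟨hzU, hgz⟩
            rw [hterm2 w hwFv] at hmem
            exact notMem_empty _ hmem
          rw [hempty]
          simp
      · intro x hx
        rcases mem_union.1 hx with hxK' | hxFv
        · obtain ⟨m₁, hm₁⟩ := hesc' x hxK'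
          by_cases hz : g^[m₁] x ∈ Fv
          · refine ⟨1 + m₁, ?_⟩
            rw [Function.iterate_add_apply]
            simp only [Function.iterate_one]
            rw [(mem_filter.1 hz).2]
            exact hvK
          · refine ⟨m₁, ?_⟩
            rw [hKdef, mem_union]
            push_neg
            exact ⟨hm₁, hz⟩
        · refine ⟨1, ?_⟩
          simp only [Function.iterate_one]
          rw [(mem_filter.1 hxFv).2]
          exact hvK

lemma lemC {k : ℕ} (hk : 2 ≤ k) (G : SimpleGraph V) (U : Finset V) (g : V → V)
    (hadj : ∀ u ∈ U, G.Adj u (g u))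
    (hfib : ∀ w : V, (U.filter fun u => g u = w).card ≤ k) :
    ∃ M : Fin k → Finset (Sym2 V), (∀ i, IsMatching G (M i)) ∧
      ∀ v ∈ U, ∃ i, Covers (M i) v := by
  obtain ⟨K, hKU, hcov, h3a, hesc⟩ := lemF hk g U.card U le_rfl
    (fun u hu => (hadj u hu).ne') hfib
  obtain ⟨c, -, hfibinj, hpar⟩ := lemE (show 0 < k by omega) g K.card K le_rfl (fun _ => ∅)
    (by
      intro x hx
      simp only [card_empty, Nat.zero_add]
      exact le_trans (card_le_card (filter_subset_filter _ hKU)) (hfib (g x)))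
    (fun x hx => h3a x hx)
    (fun _ _ _ => rfl)
    hesc
  refine ⟨fun i => (K.filter fun x => c x = i).image (fun x => s(x, g x)), ?_, ?_⟩
  · intro i
    constructor
    · intro e he
      obtain ⟨x, hx, rfl⟩ := mem_image.1 (mem_coe.1 he)
      exact (G.mem_edgeSet).2 (hadj x (hKU (mem_filter.1 hx).1))
    · intro e he f hf hne v hv
      obtain ⟨hv1, hv2⟩ := hv
      obtain ⟨x, hx, rfl⟩ := mem_image.1 (mem_coe.1 he)
      obtain ⟨y, hy, rfl⟩ := mem_image.1 (mem_coe.1 hf)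
      obtain ⟨hxK, hcx⟩ := mem_filter.1 hx
      obtain ⟨hyK, hcy⟩ := mem_filter.1 hy
      have hxy : x ≠ y := by
        rintro rfl
        exact hne rfl
      have hcxy : c x = c y := hcx.trans hcy.symm
      have hgg : g x ≠ g y := fun h => hfibinj x hxK y hyK hxy h hcxy
      rw [Sym2.mem_iff] at hv1 hv2
      rcases hv1 with h1 | h1 <;> rcases hv2 with h2 | h2
      · exact hxy (h1.symm.trans h2)
      · have hgyx : g y = x := h2.symm.trans h1
        exact hpar y hyK (by rw [hgyx]; exact hxK) (by rw [hgyx]; exact hcxy.symm)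
      · have hgxy : g x = y := h1.symm.trans h2
        exact hpar x hxK (by rw [hgxy]; exact hyK) (by rw [hgxy]; exact hcxy)
      · exact hgg (h1.symm.trans h2)
  · intro v hv
    rcases hcov v hv with hvK | ⟨x, hxK, hgx⟩
    · exact ⟨c v, s(v, g v), mem_image.2 ⟨v, mem_filter.2 ⟨hvK, rfl⟩, rfl⟩, Sym2.mem_mk_left _ _⟩
    · exact ⟨c x, s(x, g x), mem_image.2 ⟨x, mem_filter.2 ⟨hxK, rfl⟩, rfl⟩,
        by rw [hgx]; exact Sym2.mem_mk_right _ _⟩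


/-- From the stable-set condition, get a neighbor-choice `g` on `U` with all fibers of size ≤ k. -/
theorem get_g {V : Type*} [Fintype V] [DecidableEq V] (G : SimpleGraph V) [DecidableRel G.Adj]
    (k : ℕ) (hk : 2 ≤ k) (U : Finset V)
    (hcond : ∀ S : Finset V, S ⊆ U → IsStable G S → S.card ≤ k * (nbr G S).card) :
    ∃ g : V → V, (∀ u ∈ U, G.Adj u (g u)) ∧
      ∀ w : V, (U.filter fun u => g u = w).card ≤ k := by
  classical
  -- Hall condition for all subsets of U
  have main : ∀ T : Finset V, T ⊆ U → T.card ≤ k * (T.biUnion fun u => G.neighborFinset u).card := by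
    intro T hTU
    set A := T.biUnion fun u => G.neighborFinset u with hA
    set A₀ := T.filter (fun t' => ∀ u ∈ T, ¬ G.Adj t' u) with hA₀
    have hA₀T : A₀ ⊆ T := filter_subset _ _
    have hstable : IsStable G A₀ := by
      intro u hu v hv
      rw [hA₀, mem_filter] at hu hv
      exact hu.2 v (hv.1)
    have h1 : A₀.card ≤ k * (nbr G A₀).card := hcond A₀ (hA₀T.trans hTU) hstable
    have hsub : nbr G A₀ ∪ (T \ A₀) ⊆ A := by
      intro x hx
      rcases mem_union.1 hx with hx | hx
      · rw [nbr, mem_filter] at hx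
        obtain ⟨-, -, u, huA₀, hadj⟩ := hx
        exact mem_biUnion.2 ⟨u, hA₀T huA₀, (G.mem_neighborFinset _ _).2 hadj⟩
      · obtain ⟨hxT, hxA₀⟩ := mem_sdiff.1 hx
        rw [hA₀, mem_filter] at hxA₀
        push_neg at hxA₀
        obtain ⟨u, huT, hadj⟩ := hxA₀ hxT
        exact mem_biUnion.2 ⟨u, huT, (G.mem_neighborFinset _ _).2 hadj.symm⟩
    have hdisj : Disjoint (nbr G A₀) (T \ A₀) := by
      rw [disjoint_left]
      intro x hx hx'
      rw [nbr, mem_filter] at hx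
      obtain ⟨-, -, u, huA₀, hadj⟩ := hx
      obtain ⟨hxT, -⟩ := mem_sdiff.1 hx'
      rw [hA₀, mem_filter] at huA₀
      exact huA₀.2 x hxT hadj
    have hc1 : (T \ A₀).card + A₀.card = T.card := card_sdiff_add_card_eq_card hA₀T
    have hk1 : 1 ≤ k := by omega
    calc T.card = A₀.card + (T \ A₀).card := by omega
      _ ≤ k * (nbr G A₀).card + k * (T \ A₀).card := by
          have : (T \ A₀).card ≤ k * (T \ A₀).card := Nat.le_mul_of_pos_left _ (by omega)
          omega
      _ = k * ((nbr G A₀).card + (T \ A₀).card) := by ring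
      _ = k * (nbr G A₀ ∪ (T \ A₀)).card := by rw [card_union_of_disjoint hdisj]
      _ ≤ k * A.card := Nat.mul_le_mul_left _ (card_le_card hsub)
  -- Hall's theorem
  set t : {x // x ∈ U} → Finset (V × Fin k) :=
    fun x => G.neighborFinset ↑x ×ˢ (univ : Finset (Fin k)) with ht
  have hall : ∀ s : Finset {x // x ∈ U}, s.card ≤ (s.biUnion t).card := by
    intro s
    set T := s.image Subtype.val with hT
    have hTU : T ⊆ U := by
      intro x hx
      obtain ⟨y, -, rfl⟩ := mem_image.1 hx
      exact y.2
    have hbi : s.biUnion t = (T.biUnion fun u => G.neighborFinset u) ×ˢ (univ : Finset (Fin k)) := by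
      ext ⟨w, i⟩
      rw [mem_biUnion, mem_product, mem_biUnion]
      constructor
      · rintro ⟨x, hx, hmem⟩
        rw [ht, mem_product] at hmem
        exact ⟨⟨↑x, mem_image.2 ⟨x, hx, rfl⟩, hmem.1⟩, mem_univ _⟩
      · rintro ⟨⟨u, hu, hw⟩, -⟩
        obtain ⟨x, hx, rfl⟩ := mem_image.1 hu
        exact ⟨x, hx, by rw [ht, mem_product]; exact ⟨hw, mem_univ _⟩⟩
    have hcardT : T.card = s.card := card_image_of_injective _ Subtype.val_injective
    rw [hbi, card_product, card_univ, Fintype.card_fin, ← hcardT]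
    calc T.card ≤ k * (T.biUnion fun u => G.neighborFinset u).card := main T hTU
      _ = (T.biUnion fun u => G.neighborFinset u).card * k := by ring
  obtain ⟨f, hfinj, hft⟩ := (Finset.all_card_le_biUnion_card_iff_exists_injective t).1 hall
  refine ⟨fun v => if h : v ∈ U then (f ⟨v, h⟩).1 else v, ?_, ?_⟩
  · intro u hu
    simp only [dif_pos hu]
    have := hft ⟨u, hu⟩
    rw [ht, mem_product] at this
    exact (G.mem_neighborFinset _ _).1 this.1
  · intro w
    have : ∀ u ∈ U.filter (fun u => (if h : u ∈ U then (f ⟨u, h⟩).1 else u) = w),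
        (if h : u ∈ U then (f ⟨u, h⟩).2 else (⟨0, by omega⟩ : Fin k)) ∈ (univ : Finset (Fin k)) :=
      fun _ _ => mem_univ _
    have hinj : Set.InjOn (fun u => if h : u ∈ U then (f ⟨u, h⟩).2 else (⟨0, by omega⟩ : Fin k))
        ↑(U.filter (fun u => (if h : u ∈ U then (f ⟨u, h⟩).1 else u) = w)) := by
      intro u₁ hu₁ u₂ hu₂ heq
      simp only [coe_filter, Set.mem_setOf_eq] at hu₁ hu₂
      obtain ⟨hu₁U, hg₁⟩ := hu₁
      obtain ⟨hu₂U, hg₂⟩ := hu₂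
      rw [dif_pos hu₁U] at hg₁
      rw [dif_pos hu₂U] at hg₂
      simp only [dif_pos hu₁U, dif_pos hu₂U] at heq
      have : f ⟨u₁, hu₁U⟩ = f ⟨u₂, hu₂U⟩ := Prod.ext (hg₁.trans hg₂.symm) heq
      have := hfinj this
      exact congrArg Subtype.val this
    calc (U.filter fun u => (if h : u ∈ U then (f ⟨u, h⟩).1 else u) = w).card
        ≤ (univ : Finset (Fin k)).card := card_le_card_of_injOn _ this hinj
      _ = k := by rw [card_univ, Fintype.card_fin]


theorem fwd {V : Type*} [Fintype V] [DecidableEq V] (G : SimpleGraph V) [DecidableRel G.Adj]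
    (k : ℕ) (hk : 2 ≤ k) (U : Finset V)
    (M : Fin k → Finset (Sym2 V)) (hM : ∀ i, IsMatching G (M i))
    (hcov : ∀ v ∈ U, ∃ i, Covers (M i) v) :
    ∀ S : Finset V, S ⊆ U → IsStable G S → S.card ≤ k * (nbr G S).card := by
  intro S hSU hst
  have key : ∀ v : V, ∃ (i : Fin k) (w : V), v ∈ S → (s(v, w) ∈ M i ∧ G.Adj v w) := by
    intro v
    by_cases hv : v ∈ S
    · obtain ⟨i, e, he, hve⟩ := hcov v (hSU hv)
      refine ⟨i, Sym2.Mem.other hve, fun _ => ?_⟩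
      have hsp := Sym2.other_spec hve
      constructor
      · rw [hsp]; exact he
      · have := (hM i).1 he
        rw [← hsp] at this
        exact (SimpleGraph.mem_edgeSet G).1 this
    · exact ⟨⟨0, by omega⟩, v, fun h => absurd h hv⟩
  choose i w hw using key
  have hmaps : ∀ v ∈ S, (i v, w v) ∈ (univ : Finset (Fin k)) ×ˢ nbr G S := by
    intro v hv
    obtain ⟨hmem, hadj⟩ := hw v hv
    rw [mem_product]
    refine ⟨mem_univ _, ?_⟩
    rw [nbr, mem_filter]
    refine ⟨mem_univ _, fun hwS => hst v hv (w v) hwS hadj, ⟨v, hv, hadj⟩⟩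
  have hinj : Set.InjOn (fun v => (i v, w v)) ↑S := by
    intro v₁ hv₁ v₂ hv₂ heq
    simp only [Prod.mk.injEq] at heq
    obtain ⟨hi, hwv⟩ := heq
    obtain ⟨he₁, _⟩ := hw v₁ hv₁
    obtain ⟨he₂, _⟩ := hw v₂ hv₂
    rw [hi, hwv] at he₁
    by_cases heq2 : s(v₁, w v₂) = s(v₂, w v₂)
    · exact Sym2.congr_left.1 heq2
    · exfalso
      exact (hM (i v₂)).2 he₁ he₂ heq2 (w v₂) ⟨Sym2.mem_mk_right _ _, Sym2.mem_mk_right _ _⟩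
  calc S.card ≤ ((univ : Finset (Fin k)) ×ˢ nbr G S).card :=
        card_le_card_of_injOn _ hmaps hinj
    _ = k * (nbr G S).card := by rw [card_product, card_univ, Fintype.card_fin]

end Stmt3Aux

theorem stmt_3 {V : Type*} [Fintype V] [DecidableEq V] (G : SimpleGraph V) [DecidableRel G.Adj]
    (k : ℕ) (hk : 2 ≤ k) (U : Finset V) :
    (∃ M : Fin k → Finset (Sym2 V),
        (∀ i, IsMatching G (M i)) ∧ ∀ v ∈ U, ∃ i, Covers (M i) v) ↔
      ∀ S : Finset V, S ⊆ U → IsStable G S → S.card ≤ k * (nbr G S).card := by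
  constructor
  · rintro ⟨M, hM, hcov⟩
    exact Stmt3Aux.fwd G k hk U M hM hcov
  · intro hcond
    obtain ⟨g, hadj, hfib⟩ := Stmt3Aux.get_g G k hk U hcond
    exact Stmt3Aux.lemC hk G U g hadj hfib
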